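/- Define c̃_n(k) = #{λ ⊢ n : λ has no parts equal to 1 and Σ_{i≥1} i(f_{2i} + f_{2i+1}) = k}, where f_i is the multiplicity of part i in λ. Then Σ_{k,n≥0} c̃_n(k) t^k q^n = 1/((tq²; tq²)_∞ (tq³; tq²)_∞). -/

import Mathlib

open Finset

/-- `c̃_n(k)`: the number of partitions `λ` of `n` with no part equal to `1` and with
`Σ_{i≥1} i (f_{2i} + f_{2i+1}) = k`, where `f_i` is the multiplicity of the part `i`
(parts of `λ` are at most `n`, so only `1 ≤ i ≤ n` can contribute). -/
def ctilde (n k : ℕ) : ℕ :=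
  (univ.filter (fun p : n.Partition =>
    1 ∉ p.parts ∧
      ∑ i ∈ Finset.Icc 1 n, i * (p.parts.count (2 * i) + p.parts.count (2 * i + 1)) = k)).card

/-- The double generating function `Σ_{k,n} c̃_n(k) t^k q^n`, as a power series in `q` whose
coefficient of `q^n` is the polynomial `Σ_k c̃_n(k) t^k` (note `c̃_n(k) = 0` for `k > n`). -/
noncomputable def Ctgen : PowerSeries (Polynomial ℤ) :=
  PowerSeries.mk fun n =>
    ∑ k ∈ range (n + 1), (ctilde n k : ℤ) • (Polynomial.X : Polynomial ℤ) ^ k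

noncomputable def gs (w i : ℕ) : PowerSeries (Polynomial ℤ) :=
  PowerSeries.mk fun m => if i ∣ m then (Polynomial.X : Polynomial ℤ) ^ (w * (m / i)) else 0

lemma gs_mul (w i : ℕ) (hi : 0 < i) :
    (1 - PowerSeries.C (R := Polynomial ℤ) (Polynomial.X ^ w) * PowerSeries.X ^ i) * gs w i = 1 := by
  apply PowerSeries.ext; intro m
  rw [sub_mul, one_mul, map_sub, mul_assoc, mul_comm (PowerSeries.X ^ i) (gs w i),
    ← mul_assoc, PowerSeries.coeff_mul_X_pow']
  simp only [PowerSeries.coeff_C_mul, apply_ite (Polynomial.X ^ w * ·), mul_zero]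
  rcases Nat.eq_zero_or_pos m with rfl | hm
  · simp [gs, hi.ne']
  · rw [PowerSeries.coeff_one, if_neg hm.ne']
    simp only [gs, PowerSeries.coeff_mk]
    by_cases hd : i ∣ m
    · obtain ⟨q, rfl⟩ := hd
      obtain ⟨q', rfl⟩ : ∃ q', q = q' + 1 := by
        rcases q with _ | q'
        · simp at hm
        · exact ⟨q', rfl⟩
      have h1 : i * (q' + 1) - i = i * q' := by rw [Nat.mul_succ]; omega
      have h2 : i ≤ i * (q' + 1) := by rw [Nat.mul_succ]; omega
      rw [if_pos (dvd_mul_right i (q' + 1)), if_pos h2, h1, if_pos (dvd_mul_right i q'),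
        Nat.mul_div_cancel_left _ hi, Nat.mul_div_cancel_left _ hi, ← pow_add,
        Nat.mul_succ, add_comm, sub_self]
    · rw [if_neg hd]
      split_ifs with h1 h2
      · exact absurd ((Nat.sub_add_cancel h1) ▸ Dvd.dvd.add h2 (dvd_refl i)) hd
      · simp
      · simp

open Finset.HasAntidiagonal in
lemma weightedGF (n : ℕ) (s : Finset ℕ) (hs : ∀ i ∈ s, 0 < i) (w : ℕ → ℕ) :
    PowerSeries.coeff (R := Polynomial ℤ) n (∏ i ∈ s, gs (w i) i) =
      ∑ p ∈ univ.filter (fun p : n.Partition => ∀ j ∈ p.parts, j ∈ s),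
        (Polynomial.X : Polynomial ℤ) ^ (p.parts.map w).sum := by
  classical
  rw [PowerSeries.coeff_prod]
  simp only [gs, PowerSeries.coeff_mk]
  have key : ∀ l : ℕ →₀ ℕ,
      (∏ i ∈ s, if i ∣ l i then (Polynomial.X : Polynomial ℤ) ^ (w i * (l i / i)) else 0)
      = if ∀ i ∈ s, i ∣ l i then
          (Polynomial.X : Polynomial ℤ) ^ (∑ i ∈ s, w i * (l i / i)) else 0 := by
    intro l
    split_ifs with h
    · rw [← Finset.prod_pow_eq_pow_sum]
      exact Finset.prod_congr rfl fun i hi => if_pos (h i hi)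
    · push_neg at h
      obtain ⟨i, hi, hdvd⟩ := h
      exact Finset.prod_eq_zero hi (if_neg hdvd)
  simp_rw [key]
  rw [← Finset.sum_filter]
  symm
  apply Finset.sum_bij (fun (p : n.Partition)
      (_ : p ∈ univ.filter fun p : n.Partition => ∀ j ∈ p.parts, j ∈ s) =>
    (⟨Finset.filter (fun i => i ≠ 0) p.parts.toFinset,
      fun i => p.parts.count i * i, fun a => by
        simp only [ne_eq, mul_eq_zero, Multiset.count_eq_zero]
        rw [not_or, not_not]
        simp only [Multiset.mem_toFinset, not_not, mem_filter]⟩ : ℕ →₀ ℕ))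
  · intro p hp
    simp only [mem_filter, mem_univ, true_and] at hp ⊢
    rw [Finset.mem_finsuppAntidiag]
    refine ⟨⟨?_, ?_⟩, fun i _ => Dvd.intro_left _ rfl⟩
    · conv_rhs => rw [← p.parts_sum]
      rw [Finset.sum_multiset_count_of_subset _ s]
      · simp only [Finsupp.coe_mk, smul_eq_mul]
      · intro i hi
        exact hp i (Multiset.mem_toFinset.mp hi)
    · intro i hi
      have hi' : i ∈ Finset.filter (fun i => i ≠ 0) p.parts.toFinset := hi
      rw [Finset.mem_filter, Multiset.mem_toFinset] at hi'
      exact hp i hi'.1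
  · intro p₁ hp₁ p₂ hp₂ h
    apply Nat.Partition.ext
    ext i
    simp only [Finsupp.mk.injEq] at h
    by_cases hi : i = 0
    · subst hi
      rw [Multiset.count_eq_zero_of_notMem fun a => Nat.lt_irrefl 0 (p₁.parts_pos a),
        Multiset.count_eq_zero_of_notMem fun a => Nat.lt_irrefl 0 (p₂.parts_pos a)]
    · rw [← mul_left_inj' hi]
      rw [funext_iff] at h
      exact h.2 i
  · intro f hf
    simp only [mem_filter, Finset.mem_finsuppAntidiag] at hf
    obtain ⟨⟨hsum, hsupp⟩, hdvd⟩ := hf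
    refine ⟨⟨∑ i ∈ s, Multiset.replicate (f i / i) i, ?_, ?_⟩, ?_, ?_⟩
    · intro i hi
      simp only [Multiset.mem_sum] at hi
      obtain ⟨t, ht, z⟩ := hi
      rw [Multiset.eq_of_mem_replicate z]
      exact hs t ht
    · simp_rw [Multiset.sum_sum, Multiset.sum_replicate, Nat.nsmul_eq_mul]
      rw [← hsum]
      exact Finset.sum_congr rfl fun i hi => Nat.div_mul_cancel (hdvd i hi)
    · simp only [mem_filter, mem_univ, true_and]
      intro j hj
      simp only [Multiset.mem_sum] at hj
      obtain ⟨t, ht, z⟩ := hj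
      rwa [Multiset.eq_of_mem_replicate z]
    · ext i
      simp only [Finsupp.coe_mk]
      simp_rw [Multiset.count_sum', Multiset.count_replicate, Finset.sum_ite_eq']
      split_ifs with h
      · exact Nat.div_mul_cancel (hdvd i h)
      · rw [zero_mul]
        symm
        rw [← Finsupp.notMem_support_iff]
        exact fun hc => h (hsupp hc)
  · intro p hp
    simp only [mem_filter, mem_univ, true_and] at hp
    congr 1
    rw [Finset.sum_multiset_map_count]
    rw [Finset.sum_subset (fun i hi => hp i (Multiset.mem_toFinset.mp hi))]
    · refine Finset.sum_congr rfl fun i hi => ?_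
      simp only [Finsupp.coe_mk]
      rw [Nat.mul_div_cancel _ (hs i hi), smul_eq_mul, mul_comm]
    · intro i _ hi
      rw [Multiset.count_eq_zero_of_notMem fun h => hi (Multiset.mem_toFinset.mpr h)]
      simp

lemma weight_eq (n : ℕ) (M : Multiset ℕ) (hM : ∀ j ∈ M, 1 < j ∧ j ≤ n) :
    ∑ i ∈ Finset.Icc 1 n, i * (M.count (2 * i) + M.count (2 * i + 1)) =
      (M.map (fun c => c / 2)).sum := by
  induction M using Multiset.induction with
  | empty => simp
  | cons a M ih =>
    have ha := hM a (Multiset.mem_cons_self a M)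
    have hM' : ∀ j ∈ M, 1 < j ∧ j ≤ n := fun j hj => hM j (Multiset.mem_cons_of_mem hj)
    simp only [Multiset.count_cons, Multiset.map_cons, Multiset.sum_cons]
    rw [← ih hM']
    have expand : ∀ i ∈ Finset.Icc 1 n,
        i * ((M.count (2 * i) + if 2 * i = a then 1 else 0) +
          (M.count (2 * i + 1) + if 2 * i + 1 = a then 1 else 0))
        = i * (M.count (2 * i) + M.count (2 * i + 1)) +
          (if i = a / 2 then a / 2 else 0) := by
      intro i _
      have he : ((if 2 * i = a then (1 : ℕ) else 0) + (if 2 * i + 1 = a then 1 else 0))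
          = if i = a / 2 then 1 else 0 := by
        split_ifs <;> omega
      have hx : i * ((M.count (2 * i) + if 2 * i = a then 1 else 0) +
            (M.count (2 * i + 1) + if 2 * i + 1 = a then 1 else 0))
          = i * (M.count (2 * i) + M.count (2 * i + 1)) +
            i * ((if 2 * i = a then 1 else 0) + (if 2 * i + 1 = a then 1 else 0)) := by
        ring
      rw [hx, he]
      split_ifs with h
      · rw [h, mul_one]
      · rw [mul_zero]
    rw [Finset.sum_congr rfl expand, Finset.sum_add_distrib,
      Finset.sum_ite_eq' (Finset.Icc 1 n) (a / 2) (fun _ => a / 2),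
      if_pos (Finset.mem_Icc.mpr (by omega)), add_comm]

lemma map_half_sum_le (M : Multiset ℕ) : (M.map (fun c => c / 2)).sum ≤ M.sum := by
  induction M using Multiset.induction with
  | empty => simp
  | cons a M ih =>
    simp only [Multiset.map_cons, Multiset.sum_cons]
    exact add_le_add (Nat.div_le_self a 2) ih

lemma coeff_Ctgen (n : ℕ) :
    PowerSeries.coeff (R := Polynomial ℤ) n Ctgen =
      ∑ p ∈ univ.filter (fun p : n.Partition => 1 ∉ p.parts),
        (Polynomial.X : Polynomial ℤ) ^ (p.parts.map (fun c => c / 2)).sum := by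
  classical
  have hW : ∀ p : n.Partition, 1 ∉ p.parts →
      ∑ i ∈ Finset.Icc 1 n, i * (p.parts.count (2 * i) + p.parts.count (2 * i + 1)) =
        (p.parts.map (fun c => c / 2)).sum := by
    intro p hp
    apply weight_eq
    intro j hj
    refine ⟨lt_of_le_of_ne (p.parts_pos hj) (fun h => hp (h ▸ hj)), ?_⟩
    rw [← p.parts_sum]
    exact Multiset.single_le_sum (fun _ _ => Nat.zero_le _) _ hj
  rw [Ctgen, PowerSeries.coeff_mk,
    ← Finset.sum_fiberwise_of_maps_to
      (g := fun p : n.Partition => (p.parts.map (fun c => c / 2)).sum)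
      (t := range (n + 1))
      (fun p _ => Finset.mem_range.mpr (Nat.lt_succ_of_le
        (le_trans (map_half_sum_le p.parts) (le_of_eq p.parts_sum))))
      (fun p => (Polynomial.X : Polynomial ℤ) ^ (p.parts.map (fun c => c / 2)).sum)]
  apply Finset.sum_congr rfl
  intro k _
  have hset : (univ.filter fun p : n.Partition => 1 ∉ p.parts ∧
        ∑ i ∈ Finset.Icc 1 n, i * (p.parts.count (2 * i) + p.parts.count (2 * i + 1)) = k)
      = (univ.filter fun p : n.Partition => 1 ∉ p.parts).filter
          (fun p => (p.parts.map (fun c => c / 2)).sum = k) := by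
    rw [Finset.filter_filter]
    apply Finset.filter_congr
    intro p _
    exact and_congr_right fun h => by rw [hW p h]
  rw [ctilde, hset, natCast_zsmul]
  rw [Finset.sum_congr rfl (fun p hp => by rw [(Finset.mem_filter.mp hp).2]),
    Finset.sum_const]

lemma pair_prod {M : Type*} [CommMonoid M] (f : ℕ → M) (m : ℕ) :
    ∏ i ∈ Finset.Icc 2 (2 * m + 1), f i = ∏ j ∈ range m, (f (2 * j + 2) * f (2 * j + 3)) := by
  induction m with
  | zero => simp
  | succ m ih =>
    rw [Finset.prod_range_succ, ← ih]
    have hs : Finset.Icc 2 (2 * (m + 1) + 1)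
        = insert (2 * m + 3) (insert (2 * m + 2) (Finset.Icc 2 (2 * m + 1))) := by
      ext x
      simp only [Finset.mem_Icc, Finset.mem_insert]
      omega
    rw [hs, Finset.prod_insert (by simp only [Finset.mem_insert, Finset.mem_Icc]; omega),
      Finset.prod_insert (by simp only [Finset.mem_Icc]; omega)]
    simp only [mul_comm, mul_assoc, mul_left_comm]

/-- `Σ_{k,n} c̃_n(k) t^k q^n = 1/((tq²;tq²)_∞ (tq³;tq²)_∞)`: for each `n`, the coefficient of
`q^n` in the left-hand side multiplied by `Π_{j≤n} (1 - t^{j+1} q^{2j+2})(1 - t^{j+1} q^{2j+3})`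
is `1` if `n = 0` and `0` otherwise. -/
theorem Ctgen_eq :
    ∀ n : ℕ, PowerSeries.coeff (R := Polynomial ℤ) n
      (Ctgen * ∏ j ∈ range (n + 1),
        ((1 - PowerSeries.C (R := Polynomial ℤ) (Polynomial.X ^ (j + 1)) *
            PowerSeries.X ^ (2 * j + 2)) *
          (1 - PowerSeries.C (R := Polynomial ℤ) (Polynomial.X ^ (j + 1)) *
            PowerSeries.X ^ (2 * j + 3)))) = if n = 0 then 1 else 0 := by
  intro n
  classical
  set s : Finset ℕ := Finset.Icc 2 (2 * n + 3) with hs_def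
  have hs : ∀ i ∈ s, 0 < i := by
    intro i hi
    rw [hs_def, Finset.mem_Icc] at hi
    omega
  set G : PowerSeries (Polynomial ℤ) := ∏ i ∈ s, gs (i / 2) i with hG_def
  set P : PowerSeries (Polynomial ℤ) := ∏ j ∈ range (n + 1),
      ((1 - PowerSeries.C (R := Polynomial ℤ) (Polynomial.X ^ (j + 1)) *
          PowerSeries.X ^ (2 * j + 2)) *
        (1 - PowerSeries.C (R := Polynomial ℤ) (Polynomial.X ^ (j + 1)) *
          PowerSeries.X ^ (2 * j + 3))) with hP_def
  have hP : P = ∏ i ∈ s, (1 - PowerSeries.C (R := Polynomial ℤ) (Polynomial.X ^ (i / 2)) *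
      PowerSeries.X ^ i) := by
    rw [hP_def, hs_def]
    have : Finset.Icc 2 (2 * n + 3) = Finset.Icc 2 (2 * (n + 1) + 1) := by congr 1
    rw [this, pair_prod]
    apply Finset.prod_congr rfl
    intro j _
    have h2 : (2 * j + 2) / 2 = j + 1 := by omega
    have h3 : (2 * j + 3) / 2 = j + 1 := by omega
    rw [h2, h3]
  have hGP : P * G = 1 := by
    rw [hP, hG_def, ← Finset.prod_mul_distrib]
    rw [Finset.prod_congr rfl (fun i hi => gs_mul (i / 2) i (hs i hi)), Finset.prod_const_one]
  have hcoeff : ∀ m, m ≤ n → PowerSeries.coeff (R := Polynomial ℤ) m Ctgen =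
      PowerSeries.coeff (R := Polynomial ℤ) m G := by
    intro m hm
    rw [coeff_Ctgen, hG_def, weightedGF m s hs (fun c => c / 2)]
    apply Finset.sum_congr _ (fun _ _ => rfl)
    apply Finset.filter_congr
    intro p _
    constructor
    · intro h1 j hj
      rw [hs_def, Finset.mem_Icc]
      have hj1 : 1 < j := lt_of_le_of_ne (p.parts_pos hj) (fun h => h1 (h ▸ hj))
      have hjm : j ≤ m := by
        rw [← p.parts_sum]
        exact Multiset.single_le_sum (fun _ _ => Nat.zero_le _) _ hj
      omega
    · intro h h1
      have := h 1 h1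
      rw [hs_def, Finset.mem_Icc] at this
      omega
  rw [PowerSeries.coeff_mul]
  have : ∑ x ∈ antidiagonal n, PowerSeries.coeff (R := Polynomial ℤ) x.1 Ctgen *
      PowerSeries.coeff (R := Polynomial ℤ) x.2 P
      = ∑ x ∈ antidiagonal n, PowerSeries.coeff (R := Polynomial ℤ) x.1 G *
        PowerSeries.coeff (R := Polynomial ℤ) x.2 P := by
    apply Finset.sum_congr rfl
    intro x hx
    rw [Finset.HasAntidiagonal.mem_antidiagonal] at hx
    rw [hcoeff x.1 (by omega)]
  rw [this, ← PowerSeries.coeff_mul, mul_comm, hGP, PowerSeries.coeff_one]
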